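/- For λ ∈ (0,1], v ≥ 1/λ, and all u, y ∈ ℝ: the ratio of ∂/∂v(−(1/(2λ))·(v/(v²+(u−y)²))·e^{−2λv}) to (v/(v²+(u−y)²))·e^{−2λv} lies in the interval (1/2, 2). -/
import Mathlib


open Real Set

/-- For `v ≥ 1/λ` with `λ ∈ (0,1]`, the logarithmic derivative ratio
`(d/dv)(-(1/(2λ))·(v/(v²+(u−y)²))·e^{−2λv}) / ((v/(v²+(u−y)²))·e^{−2λv})`
lies in `(1/2, 2)`. -/
theorem log_deriv_ratio_exp_lambda
    (lam : ℝ) (hlam0 : 0 < lam) (hlam1 : lam ≤ 1)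
    (v : ℝ) (hv : 1 / lam ≤ v) (u y : ℝ) :
    deriv (fun t : ℝ =>
        -(1 / (2 * lam)) * (t / (t ^ 2 + (u - y) ^ 2)) * Real.exp (-2 * lam * t)) v
      / ((v / (v ^ 2 + (u - y) ^ 2)) * Real.exp (-2 * lam * v)) ∈ Set.Ioo (1 / 2 : ℝ) 2 := by
  set c := u - y with hc
  have hv0 : 0 < v := lt_of_lt_of_le (by positivity) hv
  have hlv : 1 ≤ lam * v := by
    rw [div_le_iff₀ hlam0] at hv
    linarith [hv]
  have hden : 0 < v ^ 2 + c ^ 2 := by positivity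
  have h1 : HasDerivAt (fun t : ℝ => t / (t ^ 2 + c ^ 2))
      ((1 * (v ^ 2 + c ^ 2) - v * (2 * v ^ 1)) / (v ^ 2 + c ^ 2) ^ 2) v :=
    (hasDerivAt_id v).div ((hasDerivAt_pow 2 v).add_const _) hden.ne'
  have h2 : HasDerivAt (fun t : ℝ => Real.exp (-2 * lam * t))
      (Real.exp (-2 * lam * v) * (-2 * lam * 1)) v :=
    (((hasDerivAt_id v).const_mul (-2 * lam)).exp)
  have hF : HasDerivAt (fun t : ℝ =>
        -(1 / (2 * lam)) * (t / (t ^ 2 + c ^ 2)) * Real.exp (-2 * lam * t))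
      ((-(1 / (2 * lam)) * ((1 * (v ^ 2 + c ^ 2) - v * (2 * v ^ 1)) / (v ^ 2 + c ^ 2) ^ 2))
        * Real.exp (-2 * lam * v)
        + (-(1 / (2 * lam)) * (v / (v ^ 2 + c ^ 2)))
          * (Real.exp (-2 * lam * v) * (-2 * lam * 1))) v :=
    (h1.const_mul (-(1 / (2 * lam)))).mul h2
  rw [hF.deriv]
  have hexp : Real.exp (-2 * lam * v) ≠ 0 := (Real.exp_pos _).ne'
  have hR : ((-(1 / (2 * lam)) * ((1 * (v ^ 2 + c ^ 2) - v * (2 * v ^ 1)) / (v ^ 2 + c ^ 2) ^ 2))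
        * Real.exp (-2 * lam * v)
        + (-(1 / (2 * lam)) * (v / (v ^ 2 + c ^ 2)))
          * (Real.exp (-2 * lam * v) * (-2 * lam * 1)))
      / ((v / (v ^ 2 + c ^ 2)) * Real.exp (-2 * lam * v))
      = 1 - 1 / (2 * (lam * v)) + v / (lam * (v ^ 2 + c ^ 2)) := by
    field_simp
    ring
  rw [hR]
  have hlv0 : 0 < lam * v := mul_pos hlam0 hv0
  constructor
  · have h3 : 1 / (2 * (lam * v)) ≤ 1 / 2 := by
      apply div_le_div_of_nonneg_left (by norm_num) (by norm_num)
      linarith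
    have h4 : 0 < v / (lam * (v ^ 2 + c ^ 2)) := by positivity
    linarith
  · have h5 : v / (lam * (v ^ 2 + c ^ 2)) ≤ 1 / (lam * v) := by
      rw [div_le_div_iff₀ (by positivity) (by positivity)]
      nlinarith [sq_nonneg c]
    have h6 : 1 / (lam * v) ≤ 1 := by
      rw [div_le_one hlv0]; exact hlv
    have h7 : 0 < 1 / (2 * (lam * v)) := by positivity
    linarith
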